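/- Let B(t) = (1 - 2t - sqrt(1-4t))/(2t), extended analytically to the slit plane D = C \ [1/4, infinity). Then B is a bounded analytic function on D; it is real exactly for t in (-infinity, 1/4], and on that interval B is strictly increasing from -1 (limit at -infinity) to B(1/4) = 1. -/

import Mathlib

open Filter Topology

/-- The slit plane `D = ℂ \ [1/4, ∞)`. -/
def slitPlane14 : Set ℂ := {t : ℂ | ¬ (t.im = 0 ∧ 1/4 ≤ t.re)}

noncomputable def sB (t : ℂ) : ℂ := (1 - 4*t) ^ ((1:ℂ)/2)

noncomputable def Bfun (t : ℂ) : ℂ := (1 - sB t) / (1 + sB t)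

lemma mem_slit (t : ℂ) (ht : t ∈ slitPlane14) : (1 - 4*t) ∈ Complex.slitPlane := by
  simp only [slitPlane14, Set.mem_setOf_eq, not_and, not_le] at ht
  rcases eq_or_ne t.im 0 with h | h
  · left
    have := ht h
    simp [Complex.sub_re, Complex.mul_re, Complex.one_re]
    nlinarith
  · right
    simp [Complex.sub_im, Complex.mul_im, h]

lemma sB_re_pos {t : ℂ} (ht : t ∈ slitPlane14) : 0 < (sB t).re := by
  have hm := mem_slit t ht
  have hz : (1 - 4*t) ≠ 0 := Complex.slitPlane_ne_zero hm
  have h1 : -Real.pi < Complex.arg (1 - 4*t) := Complex.neg_pi_lt_arg _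
  have h2 : Complex.arg (1 - 4*t) < Real.pi := by
    apply Complex.arg_lt_pi_iff.2
    rcases hm with h | h
    · exact Or.inl h.le
    · exact Or.inr h
  rw [sB, Complex.cpow_def_of_ne_zero hz, Complex.exp_re]
  apply mul_pos (Real.exp_pos _)
  have him : ((Complex.log (1 - 4*t)) * ((1:ℂ)/2)).im = Complex.arg (1 - 4*t) / 2 := by
    rw [Complex.mul_im, Complex.log_im]
    norm_num; ring
  rw [him]
  apply Real.cos_pos_of_mem_Ioo
  rw [Set.mem_Ioo]
  constructor <;> linarith

lemma sB_sq {t : ℂ} : (sB t) ^ 2 = 1 - 4*t := by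
  have := Complex.cpow_nat_inv_pow (1 - 4*t) (n := 2) (by norm_num)
  rw [sB]
  have h : ((1:ℂ)/2) = ((2:ℕ):ℂ)⁻¹ := by norm_num
  rw [h]
  exact this

lemma one_add_sB_ne {t : ℂ} (ht : t ∈ slitPlane14) : 1 + sB t ≠ 0 := by
  intro h
  have : (sB t).re = -1 := by
    have := congrArg Complex.re h
    simp [Complex.add_re] at this
    linarith
  have := sB_re_pos ht
  linarith

lemma sB_real {x : ℝ} (hx : x < 1/4) :
    sB (x : ℂ) = (Real.sqrt (1 - 4*x) : ℂ) := by
  have h0 : (0:ℝ) ≤ 1 - 4*x := by linarith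
  have : (1 - 4*(x:ℂ)) = ((1 - 4*x : ℝ) : ℂ) := by push_cast; ring
  rw [sB, this, show ((1:ℂ)/2) = (((1/2:ℝ)):ℂ) by norm_num, ← Complex.ofReal_cpow h0,
    Real.sqrt_eq_rpow]

noncomputable def fB (x : ℝ) : ℝ :=
  (1 - Real.sqrt (1 - 4*x)) / (1 + Real.sqrt (1 - 4*x))

lemma Bfun_real {x : ℝ} (hx : x < 1/4) : Bfun (x : ℂ) = (fB x : ℂ) := by
  rw [Bfun, sB_real hx, fB]
  push_cast
  ring

lemma Bfun_re {x : ℝ} (hx : x < 1/4) : (Bfun (x:ℂ)).re = fB x := by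
  rw [Bfun_real hx, Complex.ofReal_re]

lemma sqrt_tendsto : Tendsto Real.sqrt atTop atTop := by
  apply tendsto_atTop_atTop.2
  intro b
  refine ⟨(max b 0)^2, fun a ha => ?_⟩
  have h1 : max b 0 ≤ Real.sqrt a := by
    rw [show max b 0 = Real.sqrt ((max b 0)^2) from (Real.sqrt_sq (le_max_right b 0)).symm]
    exact Real.sqrt_le_sqrt ha
  exact le_trans (le_max_left b 0) h1

lemma fB_tendsto_atBot : Tendsto fB atBot (𝓝 (-1)) := by
  have hg : Tendsto (fun y : ℝ => (1 - y)/(1 + y)) atTop (𝓝 (-1)) := by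
    have h0 : Tendsto (fun y : ℝ => y⁻¹) atTop (𝓝 0) := tendsto_inv_atTop_zero
    have h1 : Tendsto (fun y : ℝ => (y⁻¹ - 1)/(y⁻¹ + 1)) atTop (𝓝 ((0 - 1)/(0 + 1))) :=
      Tendsto.div ((h0.sub tendsto_const_nhds)) (h0.add tendsto_const_nhds) (by norm_num)
    have h2 : (fun y : ℝ => (y⁻¹ - 1)/(y⁻¹ + 1)) =ᶠ[atTop] fun y : ℝ => (1 - y)/(1 + y) := by
      filter_upwards [eventually_gt_atTop (0:ℝ)] with y hy
      rw [div_eq_div_iff]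
      · field_simp
      · positivity
      · positivity
    have h3 : ((0:ℝ) - 1)/((0:ℝ) + 1) = -1 := by norm_num
    rw [h3] at h1
    exact h1.congr' h2
  have ha : Tendsto (fun x : ℝ => Real.sqrt (1 - 4*x)) atBot atTop := by
    apply sqrt_tendsto.comp
    apply tendsto_atTop.2
    intro b
    filter_upwards [eventually_le_atBot ((1-b)/4)] with x hx
    linarith
  exact hg.comp ha

/-- `B(t) = (1 - 2t - √(1-4t))/(2t)` (principal square root) extends to a bounded
analytic function on the slit plane `D = ℂ \ [1/4,∞)`; it is real exactly for `t` real
(in `D`, i.e. `t ∈ (-∞, 1/4)`), and on `(-∞, 1/4)` it is strictly increasing, with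
limit `-1` at `-∞` and boundary value `B(1/4) = 1`, staying in `(-1, 1)`. -/
theorem B_analytic_bounded_real_monotone :
    ∃ B : ℂ → ℂ,
      AnalyticOnNhd ℂ B slitPlane14 ∧
      (∃ M : ℝ, ∀ t ∈ slitPlane14, ‖B t‖ ≤ M) ∧
      (∀ t ∈ slitPlane14, t ≠ 0 →
        B t = (1 - 2*t - (1 - 4*t) ^ ((1:ℂ)/2)) / (2*t)) ∧
      (∀ t ∈ slitPlane14, ((B t).im = 0 ↔ (t.im = 0 ∧ t.re ≤ 1/4))) ∧
      StrictMonoOn (fun x : ℝ => (B x).re) (Set.Iio (1/4)) ∧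
      (∀ x : ℝ, x < 1/4 → -1 < (B x).re ∧ (B x).re < 1) ∧
      Tendsto (fun x : ℝ => (B x).re) atBot (𝓝 (-1)) ∧
      Tendsto (fun x : ℝ => (B x).re) (𝓝[Set.Iio (1/4)] (1/4)) (𝓝 1) := by
  refine ⟨Bfun, ?_, ⟨1, ?_⟩, ?_, ?_, ?_, ?_, ?_, ?_⟩
  · -- analytic
    have hs : AnalyticOnNhd ℂ sB slitPlane14 := by
      have : AnalyticOnNhd ℂ (fun t : ℂ => (1 - 4*t) ^ ((1:ℂ)/2)) slitPlane14 :=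
        AnalyticOnNhd.cpow
          ((analyticOnNhd_const).sub ((analyticOnNhd_const).mul (analyticOnNhd_id)))
          analyticOnNhd_const mem_slit
      exact this
    exact AnalyticOnNhd.div ((analyticOnNhd_const).sub hs) ((analyticOnNhd_const).add hs)
      (fun t ht => one_add_sB_ne ht)
  · -- bounded by 1
    intro t ht
    rw [Bfun, norm_div]
    have hd : 0 < ‖1 + sB t‖ := norm_pos_iff.2 (one_add_sB_ne ht)
    rw [div_le_one hd]
    have hnsq : Complex.normSq (1 - sB t) ≤ Complex.normSq (1 + sB t) := by
      simp only [Complex.normSq_apply, Complex.sub_re, Complex.sub_im, Complex.add_re,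
        Complex.add_im, Complex.one_re, Complex.one_im]
      nlinarith [sB_re_pos ht]
    have h1 : ‖1 - sB t‖ = Real.sqrt (Complex.normSq (1 - sB t)) := by
      rw [Complex.norm_def]
    have h2 : ‖1 + sB t‖ = Real.sqrt (Complex.normSq (1 + sB t)) := by
      rw [Complex.norm_def]
    rw [h1, h2]
    exact Real.sqrt_le_sqrt hnsq
  · -- formula
    intro t ht ht0
    have hsq := sB_sq (t := t)
    rw [show (1 - 4*t) ^ ((1:ℂ)/2) = sB t from rfl, Bfun]
    rw [div_eq_div_iff (one_add_sB_ne ht) (by simpa using ht0)]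
    linear_combination hsq
  · -- realness
    intro t ht
    constructor
    · intro hB
      have key : sB t * (1 + Bfun t) = 1 - Bfun t := by
        rw [Bfun]
        field_simp [one_add_sB_ne ht]
        ring
      have hBne : 1 + (Bfun t).re ≠ 0 := by
        intro h0
        have hB1 : Bfun t = -1 := by
          apply Complex.ext
          · simp only [Complex.neg_re, Complex.one_re]; linarith
          · rw [hB]; simp
        rw [hB1] at key
        norm_num at key
      have him : (sB t).im = 0 := by
        have h1 := congrArg Complex.im key
        simp only [Complex.mul_im, Complex.add_im, Complex.add_re, Complex.one_im,
          Complex.one_re, Complex.sub_im, hB] at h1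
        have : (sB t).im * (1 + (Bfun t).re) = 0 := by linarith
        rcases mul_eq_zero.1 this with h | h
        · exact h
        · exact absurd h hBne
      have hsq := sB_sq (t := t)
      have hre := congrArg Complex.re hsq
      have him2 := congrArg Complex.im hsq
      have e1 : (sB t ^ 2).im = 2 * (sB t).re * (sB t).im := by
        rw [pow_two, Complex.mul_im]; ring
      have e2 : ((1:ℂ) - 4*t).im = -4 * t.im := by
        simp [Complex.sub_im, Complex.mul_im, Complex.re_ofNat, Complex.im_ofNat]
      have e3 : (sB t ^ 2).re = (sB t).re^2 - (sB t).im^2 := by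
        rw [pow_two, Complex.mul_re]; ring
      have e4 : ((1:ℂ) - 4*t).re = 1 - 4 * t.re := by
        simp [Complex.sub_re, Complex.mul_re, Complex.re_ofNat, Complex.im_ofNat]
      rw [e1, e2] at him2
      rw [e3, e4] at hre
      have htim : t.im = 0 := by rw [him] at him2; linarith
      refine ⟨htim, ?_⟩
      have hpos := sB_re_pos ht
      nlinarith
    · rintro ⟨him, hre⟩
      have hlt : t.re < 1/4 := by
        rcases lt_or_eq_of_le hre with h | h
        · exact h
        · exact absurd ⟨him, h.ge⟩ ht
      have hteq : t = ((t.re : ℝ) : ℂ) := by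
        apply Complex.ext <;> simp [him]
      rw [hteq, Bfun_real hlt, Complex.ofReal_im]
  · -- strict mono
    intro x hx y hy hxy
    simp only [Set.mem_Iio] at hx hy
    simp only []
    push_cast
    rw [Bfun_re hx, Bfun_re hy, fB, fB]
    set a := Real.sqrt (1 - 4*x) with ha
    set b := Real.sqrt (1 - 4*y) with hb
    have hb0 : 0 ≤ b := Real.sqrt_nonneg _
    have hba : b < a := by
      rw [ha, hb]
      apply Real.sqrt_lt_sqrt (by linarith)
      linarith
    rw [div_lt_div_iff₀ (by linarith) (by linarith)]
    nlinarith
  · -- bounds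
    intro x hx
    rw [Bfun_re hx, fB]
    set a := Real.sqrt (1 - 4*x) with ha
    have ha0 : 0 < a := Real.sqrt_pos.2 (by linarith)
    constructor
    · rw [lt_div_iff₀ (by linarith)]
      linarith
    · rw [div_lt_one (by linarith)]
      linarith
  · -- atBot
    apply fB_tendsto_atBot.congr'
    filter_upwards [eventually_lt_atBot ((1:ℝ)/4)] with x hx
    exact (Bfun_re hx).symm
  · -- at 1/4 from the left
    have hsc : ContinuousAt (fun x : ℝ => Real.sqrt (1 - 4*x)) (1/4) :=
      Real.continuous_sqrt.continuousAt.comp (by fun_prop)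
    have hc : ContinuousAt fB (1/4) := by
      apply ContinuousAt.div (continuousAt_const.sub hsc) (continuousAt_const.add hsc)
      norm_num
    have hval : fB (1/4) = 1 := by
      rw [fB]
      norm_num
    have h1 : Tendsto fB (𝓝[Set.Iio (1/4)] (1/4)) (𝓝 (fB (1/4))) :=
      hc.continuousWithinAt.tendsto
    rw [hval] at h1
    apply h1.congr'
    filter_upwards [self_mem_nhdsWithin] with x hx
    exact (Bfun_re hx).symm
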